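/- Let {Π_j}_{j=0}^{d²-1} be a minimal IC POVM on ℂ^d (d² outcomes spanning the Hermitian matrices). Then {Π_j} is tight IC, i.e. d Σ_j |Π_j⟩⟩⟨⟨Π_j|/tr(Π_j) = α I + β|1⟩⟩⟨⟨1| for some α, β > 0, if and only if there exist positive constants α̃, β̃ such that tr(Π_j Π_k) = α̃ √(tr(Π_j) tr(Π_k)) δ_{jk} + β̃ tr(Π_j) tr(Π_k) for all j, k. Moreover α̃ = α/d and β̃ = β/d. -/

import Mathlib

open Matrix ComplexOrder

noncomputable section

abbrev Mat (d : ℕ) := Matrix (Fin d) (Fin d) ℂ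

/-- The real vector space of Hermitian `d × d` complex matrices. -/
abbrev HermM (d : ℕ) : Submodule ℝ (Mat d) := selfAdjoint.submodule ℝ (Mat d)

/-- The identity matrix as a Hermitian matrix. -/
def hermOne (d : ℕ) : HermM d := ⟨1, IsSelfAdjoint.one (Mat d)⟩

/-- The superoperator `|A⟩⟩⟨⟨B| : X ↦ tr(B X) • A` on Hermitian matrices. -/
def outerSO (d : ℕ) (A B : HermM d) : HermM d →ₗ[ℝ] HermM d :=
  (Complex.reLm ∘ₗ Matrix.traceLinearMap (Fin d) ℝ ℂ ∘ₗ
    LinearMap.mulLeft ℝ (B : Mat d) ∘ₗ (HermM d).subtype).smulRight A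

lemma outerSO_apply (d : ℕ) (A B X : HermM d) :
    outerSO d A B X = ((Matrix.trace ((B : Mat d) * (X : Mat d))).re) • A := rfl

/-- The ℝ-linear map `X ↦ I • X` on matrices. -/
def mulI (d : ℕ) : Mat d →ₗ[ℝ] Mat d where
  toFun X := Complex.I • X
  map_add' X Y := smul_add _ X Y
  map_smul' r X := smul_comm Complex.I r X

lemma finrank_hermM (d : ℕ) : Module.finrank ℝ (HermM d) = d ^ 2 := by
  let e : (HermM d × HermM d) →ₗ[ℝ] Mat d :=
    ((HermM d).subtype).coprod ((mulI d) ∘ₗ (HermM d).subtype)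
  have happ : ∀ HK : HermM d × HermM d,
      e HK = (HK.1 : Mat d) + Complex.I • (HK.2 : Mat d) := fun _ => rfl
  have hinj : Function.Injective e := by
    rw [injective_iff_map_eq_zero]
    rintro ⟨H, K⟩ h0
    rw [happ] at h0
    have hH : (H : Mat d) = 0 := by
      have hs := congrArg star h0
      rw [star_add, star_smul, star_zero, H.2.star_eq, K.2.star_eq, Complex.star_def,
        Complex.conj_I, neg_smul] at hs
      ext i j
      have h1 := congrArg (fun M : Mat d => M i j) h0
      have h2 := congrArg (fun M : Mat d => M i j) hs
      simp only [Matrix.add_apply, Matrix.neg_apply, Matrix.smul_apply, Matrix.zero_apply,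
        smul_eq_mul] at h1 h2
      have h3 : (H : Mat d) i j + (H : Mat d) i j = 0 := by linear_combination h1 + h2
      simpa using add_self_eq_zero.mp h3
    have hK : (K : Mat d) = 0 := by
      have h3 : Complex.I • (K : Mat d) = 0 := by rwa [hH, zero_add] at h0
      calc (K : Mat d) = -(Complex.I • (Complex.I • (K : Mat d))) := by
            rw [smul_smul, Complex.I_mul_I, neg_smul, one_smul, neg_neg]
        _ = 0 := by rw [h3, smul_zero, neg_zero]
    exact Prod.ext (Subtype.ext hH) (Subtype.ext hK)
  have hsurj : Function.Surjective e := by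
    intro A
    refine ⟨(⟨(1/2 : ℂ) • (A + star A), ?_⟩, ⟨(-(Complex.I)/2) • (A - star A), ?_⟩), ?_⟩
    · show star _ = _
      simp only [star_smul, star_add, star_star, Complex.star_def, map_div₀,
        _root_.map_one, _root_.map_ofNat]
      module
    · show star _ = _
      simp only [star_smul, star_sub, star_star, Complex.star_def, map_div₀, map_neg,
        Complex.conj_I, _root_.map_ofNat, neg_neg]
      module
    · rw [happ]
      show (1/2 : ℂ) • (A + star A) + Complex.I • ((-(Complex.I)/2) • (A - star A)) = A
      rw [smul_smul]
      have hI : Complex.I * (-(Complex.I)/2) = 1/2 := by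
        field_simp
        rw [Complex.I_sq, neg_neg]
      rw [hI]
      module
  have hfr := LinearEquiv.finrank_eq (LinearEquiv.ofBijective e ⟨hinj, hsurj⟩)
  rw [Module.finrank_prod] at hfr
  have h2 : Module.finrank ℝ (Mat d) = d * d * 2 := by
    rw [Module.finrank_matrix]
    simp [Complex.finrank_real_complex]
  rw [h2] at hfr
  have h3 : 2 * Module.finrank ℝ (HermM d) = 2 * d ^ 2 := by
    rw [two_mul, hfr]; ring
  omega

/-- A minimal IC POVM {Π_j}_{j=0}^{d²-1} is tight IC with frame
superoperator αI + β|1⟩⟩⟨⟨1| (α, β > 0) iff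
tr(Π_j Π_k) = (α/d)√(tr Π_j tr Π_k) δ_{jk} + (β/d) tr Π_j tr Π_k for all j, k;
i.e. the constants are α̃ = α/d, β̃ = β/d. -/
theorem minimal_tightIC_characterization (d : ℕ) (hd : 2 ≤ d)
    (P : Fin (d ^ 2) → HermM d)
    (hpsd : ∀ j, ((P j : Mat d)).PosSemidef)
    (htrpos : ∀ j, 0 < (Matrix.trace (P j : Mat d)).re)
    (hsum : ∑ j, (P j : Mat d) = 1)
    (hIC : ∀ A : Mat d, A.IsHermitian →
      A ∈ Submodule.span ℝ (Set.range fun j => (P j : Mat d))) :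
    ∀ α β : ℝ, 0 < α → 0 < β →
      (((d : ℝ) • ∑ j, ((Matrix.trace (P j : Mat d)).re)⁻¹ • outerSO d (P j) (P j) =
          α • LinearMap.id + β • outerSO d (hermOne d) (hermOne d)) ↔
        (∀ j k, (Matrix.trace ((P j : Mat d) * (P k : Mat d))).re =
          (α / d) * Real.sqrt ((Matrix.trace (P j : Mat d)).re *
            (Matrix.trace (P k : Mat d)).re) * (if j = k then 1 else 0) +
          (β / d) * (Matrix.trace (P j : Mat d)).re * (Matrix.trace (P k : Mat d)).re)) := by
  intro α β hα hβ
  have hd0 : (d : ℝ) ≠ 0 := by positivity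
  have hone : hermOne d = ∑ j, P j := by
    apply Subtype.ext
    rw [AddSubmonoidClass.coe_finset_sum]
    exact hsum.symm
  have hspan : Submodule.span ℝ (Set.range P) = (⊤ : Submodule ℝ (HermM d)) := by
    rw [Submodule.eq_top_iff']
    intro x
    have hherm : (x : Mat d).IsHermitian := x.2.star_eq
    have hx := hIC (x : Mat d) hherm
    have hx' : (x : Mat d) ∈
        Submodule.map (HermM d).subtype (Submodule.span ℝ (Set.range P)) := by
      rw [Submodule.map_span]
      have hr : (Set.range fun j => (P j : Mat d)) = (HermM d).subtype '' Set.range P := by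
        rw [← Set.range_comp]; rfl
      rwa [← hr]
    obtain ⟨y, hy, hyx⟩ := hx'
    have hyxx : y = x := Subtype.ext hyx
    rwa [hyxx] at hy
  have hli : LinearIndependent ℝ P := by
    apply linearIndependent_of_top_le_span_of_card_eq_finrank (hspan ▸ le_refl _)
    simp [finrank_hermM]
  have hLHS : ∀ X : HermM d,
      ((d : ℝ) • ∑ j, ((Matrix.trace (P j : Mat d)).re)⁻¹ • outerSO d (P j) (P j)) X =
      ∑ j, ((d : ℝ) * ((Matrix.trace (P j : Mat d)).re)⁻¹ *
        (Matrix.trace ((P j : Mat d) * (X : Mat d))).re) • P j := by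
    intro X
    rw [LinearMap.smul_apply, LinearMap.sum_apply, Finset.smul_sum]
    refine Finset.sum_congr rfl fun j _ => ?_
    rw [LinearMap.smul_apply, outerSO_apply, smul_smul, smul_smul, mul_assoc]
  have hRHS : ∀ X : HermM d,
      (α • (LinearMap.id : HermM d →ₗ[ℝ] HermM d) +
        β • outerSO d (hermOne d) (hermOne d)) X =
      α • X + (β * (Matrix.trace (X : Mat d)).re) • hermOne d := by
    intro X
    rw [LinearMap.add_apply, LinearMap.smul_apply, LinearMap.smul_apply, outerSO_apply]
    have h1 : ((hermOne d : Mat d)) * (X : Mat d) = (X : Mat d) := one_mul _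
    rw [h1, LinearMap.id_apply, smul_smul]
  have haux : ∀ m : Fin (d ^ 2),
      ∑ i, ((if i = m then α else 0) + β * (Matrix.trace (P m : Mat d)).re) • P i
      = α • P m + (β * (Matrix.trace (P m : Mat d)).re) • hermOne d := by
    intro m
    simp only [add_smul]
    rw [Finset.sum_add_distrib]
    congr 1
    · rw [show (fun i => (if i = m then α else 0) • P i)
          = fun i => if i = m then α • P m else 0 from funext fun i => by
            split
            · next h => rw [h]
            · next h => rw [zero_smul]]
      simp
    · rw [hone, Finset.smul_sum]
  constructor
  · intro h j k
    have hk := DFunLike.congr_fun h (P k)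
    rw [hLHS, hRHS] at hk
    have h0 : ∑ i, (((d : ℝ) * ((Matrix.trace (P i : Mat d)).re)⁻¹ *
        (Matrix.trace ((P i : Mat d) * (P k : Mat d))).re) -
        ((if i = k then α else 0) + β * (Matrix.trace (P k : Mat d)).re)) • P i = 0 := by
      rw [Finset.sum_congr rfl fun i _ => sub_smul _ _ (P i), Finset.sum_sub_distrib,
        hk, haux k, sub_self]
    have hcoef := Fintype.linearIndependent_iff.mp hli _ h0
    have hcd := sub_eq_zero.mp (hcoef j)
    by_cases hjk : j = k
    · subst hjk
      rw [if_pos rfl] at hcd ⊢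
      rw [Real.sqrt_mul_self (htrpos j).le]
      have htj := (htrpos j).ne'
      field_simp at hcd ⊢
      linear_combination hcd
    · rw [if_neg hjk] at hcd ⊢
      rw [zero_add] at hcd
      rw [mul_zero, zero_add]
      have htj := (htrpos j).ne'
      field_simp at hcd ⊢
      linear_combination hcd
  · intro h
    apply LinearMap.ext_on hspan
    rintro x ⟨m, rfl⟩
    rw [hLHS, hRHS]
    have hc : ∀ i, (d : ℝ) * ((Matrix.trace (P i : Mat d)).re)⁻¹ *
        (Matrix.trace ((P i : Mat d) * (P m : Mat d))).re
        = (if i = m then α else 0) + β * (Matrix.trace (P m : Mat d)).re := by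
      intro i
      rw [h i m]
      have hti := (htrpos i).ne'
      by_cases him : i = m
      · subst him
        rw [if_pos rfl, if_pos rfl, Real.sqrt_mul_self (htrpos i).le]
        field_simp
      · rw [if_neg him, if_neg him, zero_add, mul_zero, zero_add]
        field_simp
    rw [Finset.sum_congr rfl fun i _ => by rw [hc i]]
    exact haux m
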